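/- arXiv:1509.05540 — 2 statements merged into one kernel-verified Lean document; each statement's English description precedes it below -/
import Mathlib

section
/- Let N ≥ 1 and let f ∈ L^1(ℝ^N) satisfy ∫_{ℝ^N} f(x) dx = 0. Then lim_{t → ∞} ‖P_t * f‖_{L^1(ℝ^N)} = 0, where P_t * f denotes the convolution of f with the dilated Poisson kernel P_t. -/
open MeasureTheory Real Filter ENNReal

/-- The normalizing constant of the Poisson kernel on `ℝ^N`. -/
noncomputable def cN (N : ℕ) : ℝ :=
  Real.Gamma (((N : ℝ) + 1) / 2) / Real.pi ^ (((N : ℝ) + 1) / 2)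

/-- The Poisson kernel `P(x) = c_N (1 + ‖x‖²)^{-(N+1)/2}` on `ℝ^N`. -/
noncomputable def P (N : ℕ) (x : EuclideanSpace ℝ (Fin N)) : ℝ :=
  cN N * (1 + ‖x‖ ^ 2) ^ (-(((N : ℝ) + 1) / 2))

/-- The dilated Poisson kernel `P_t(x) = t^{-N} P(x/t)`. -/
noncomputable def Pt (N : ℕ) (t : ℝ) (x : EuclideanSpace ℝ (Fin N)) : ℝ :=
  t ^ (-(N : ℝ)) * P N (t⁻¹ • x)

lemma P_continuous (N : ℕ) : Continuous (P N) := by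
  unfold P
  refine continuous_const.mul ?_
  refine Continuous.rpow_const (by continuity) (fun x => Or.inl (by positivity))

lemma P_integrable (N : ℕ) : Integrable (P N) (volume : Measure (EuclideanSpace ℝ (Fin N))) := by
  have h : ((Module.finrank ℝ (EuclideanSpace ℝ (Fin N))) : ℝ) < (N : ℝ) + 1 := by
    simp [finrank_euclideanSpace_fin]
  have := (integrable_rpow_neg_one_add_norm_sq (E := EuclideanSpace ℝ (Fin N))
    (μ := volume) (r := (N : ℝ) + 1) h).const_mul (cN N)
  unfold P
  convert this using 4; ring

noncomputable def Phi (N : ℕ) (z : EuclideanSpace ℝ (Fin N)) : ℝ≥0∞ :=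
  ∫⁻ u, (‖P N (u - z) - P N u‖₊ : ℝ≥0∞)

lemma Phi_tendsto (N : ℕ) : Tendsto (Phi N) (nhds 0) (nhds 0) := by
  have hmem : MemLp (P N) 1 (volume : Measure (EuclideanSpace ℝ (Fin N))) :=
    memLp_one_iff_integrable.mpr (P_integrable N)
  set gP : Lp ℝ 1 (volume : Measure (EuclideanSpace ℝ (Fin N))) := hmem.toLp (P N) with hgP
  let F : C(EuclideanSpace ℝ (Fin N) × EuclideanSpace ℝ (Fin N), EuclideanSpace ℝ (Fin N)) :=
    ⟨fun p => p.2 - p.1, by fun_prop⟩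
  let T : EuclideanSpace ℝ (Fin N) → C(EuclideanSpace ℝ (Fin N), EuclideanSpace ℝ (Fin N)) :=
    fun z => F.curry z
  have hTz : ∀ z x, T z x = x - z := fun z x => rfl
  have hTm : ∀ z, MeasurePreserving (T z) (volume : Measure (EuclideanSpace ℝ (Fin N))) volume :=
    fun z => measurePreserving_sub_right volume z
  have hTcont : Continuous T := F.curry.continuous
  have hT := Filter.Tendsto.compMeasurePreservingLp (f := fun _ : EuclideanSpace ℝ (Fin N) => gP)
    (g := T) tendsto_const_nhds (hTcont.tendsto 0) hTm (hTm 0) one_ne_top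
  have hedist : Tendsto
      (fun z => edist (Lp.compMeasurePreserving (T z) (hTm z) gP) gP) (nhds 0)
      (nhds (edist (Lp.compMeasurePreserving (T 0) (hTm 0) gP) gP)) :=
    hT.edist tendsto_const_nhds
  have key : ∀ z, edist (Lp.compMeasurePreserving (T z) (hTm z) gP) gP = Phi N z := by
    intro z
    rw [Lp.edist_def]
    have h1 : (⇑(Lp.compMeasurePreserving (T z) (hTm z) gP) : EuclideanSpace ℝ (Fin N) → ℝ)
        =ᵐ[volume] fun u => P N (u - z) := by
      filter_upwards [Lp.coeFn_compMeasurePreserving gP (hTm z),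
        (hTm z).quasiMeasurePreserving.ae_eq_comp (hmem.coeFn_toLp)] with u h1 h2
      rw [h1]
      exact h2
    have h2 : (⇑(Lp.compMeasurePreserving (T z) (hTm z) gP) - ⇑gP)
        =ᵐ[volume] fun u => P N (u - z) - P N u := by
      filter_upwards [h1, hmem.coeFn_toLp] with u hu1 hu2
      rw [Pi.sub_apply, hu1, hu2]
    rw [eLpNorm_congr_ae h2, eLpNorm_one_eq_lintegral_enorm]
    rfl
  have hzero : edist (Lp.compMeasurePreserving (T 0) (hTm 0) gP) gP = 0 := by
    rw [key, Phi]
    have : ∀ u : EuclideanSpace ℝ (Fin N), P N (u - 0) - P N u = 0 := fun u => by simp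
    simp [this]
  rw [hzero] at hedist
  exact hedist.congr key

lemma P_finite_lintegral (N : ℕ) :
    (∫⁻ u, (‖P N u‖₊ : ℝ≥0∞) ∂(volume : Measure (EuclideanSpace ℝ (Fin N)))) < ⊤ :=
  (P_integrable N).hasFiniteIntegral

lemma Phi_le (N : ℕ) (z : EuclideanSpace ℝ (Fin N)) :
    Phi N z ≤ 2 * ∫⁻ u, (‖P N u‖₊ : ℝ≥0∞) := by
  have hm : Measurable fun u : EuclideanSpace ℝ (Fin N) => (‖P N (u - z)‖₊ : ℝ≥0∞) :=
    (((P_continuous N).comp (continuous_id.sub continuous_const)).measurable).nnnorm.coe_nnreal_ennreal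
  calc Phi N z ≤ ∫⁻ u, ((‖P N (u - z)‖₊ : ℝ≥0∞) + (‖P N u‖₊ : ℝ≥0∞)) := by
        refine lintegral_mono fun u => ?_
        rw [← ENNReal.coe_add]
        exact ENNReal.coe_le_coe.mpr (nnnorm_sub_le _ _)
    _ = (∫⁻ u, (‖P N (u - z)‖₊ : ℝ≥0∞)) + ∫⁻ u, (‖P N u‖₊ : ℝ≥0∞) := lintegral_add_left hm _
    _ = (∫⁻ u, (‖P N u‖₊ : ℝ≥0∞)) + ∫⁻ u, (‖P N u‖₊ : ℝ≥0∞) := by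
        rw [lintegral_sub_right_eq_self (fun u => (‖P N u‖₊ : ℝ≥0∞)) z]
    _ = 2 * ∫⁻ u, (‖P N u‖₊ : ℝ≥0∞) := (two_mul _).symm

lemma scaling (N : ℕ) {t : ℝ} (ht : 0 < t) (y : EuclideanSpace ℝ (Fin N)) :
    (∫⁻ x, (‖Pt N t (x - y) - Pt N t x‖₊ : ℝ≥0∞)) = Phi N (t⁻¹ • y) := by
  have ht0 : t ≠ 0 := ht.ne'
  have htN : (0:ℝ) < t ^ N := pow_pos ht N
  have hPt : ∀ x : EuclideanSpace ℝ (Fin N), Pt N t (x - y) - Pt N t x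
      = (t ^ N)⁻¹ * (P N (t⁻¹ • x - t⁻¹ • y) - P N (t⁻¹ • x)) := by
    intro x
    have h : t ^ (-(N:ℝ)) = (t ^ N)⁻¹ := by
      rw [Real.rpow_neg ht.le, Real.rpow_natCast]
    unfold Pt; rw [smul_sub, h]; ring
  have hmeas : Measurable fun u : EuclideanSpace ℝ (Fin N) =>
      (‖P N (u - t⁻¹ • y) - P N u‖₊ : ℝ≥0∞) :=
    ((((P_continuous N).comp (continuous_id.sub continuous_const)).sub
      (P_continuous N)).measurable).nnnorm.coe_nnreal_ennreal
  calc (∫⁻ x, (‖Pt N t (x - y) - Pt N t x‖₊ : ℝ≥0∞))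
      = ∫⁻ x, ENNReal.ofReal ((t ^ N)⁻¹) *
          (‖P N (t⁻¹ • x - t⁻¹ • y) - P N (t⁻¹ • x)‖₊ : ℝ≥0∞) := by
        congr 1; funext x
        rw [hPt x, nnnorm_mul, ENNReal.coe_mul, ← enorm_eq_nnnorm, Real.enorm_eq_ofReal (by positivity)]
    _ = ENNReal.ofReal ((t ^ N)⁻¹) *
          ∫⁻ x, (‖P N (t⁻¹ • x - t⁻¹ • y) - P N (t⁻¹ • x)‖₊ : ℝ≥0∞) :=
        lintegral_const_mul' _ _ ENNReal.ofReal_ne_top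
    _ = ENNReal.ofReal ((t ^ N)⁻¹) * ∫⁻ u, (‖P N (u - t⁻¹ • y) - P N u‖₊ : ℝ≥0∞)
          ∂(Measure.map (t⁻¹ • · : EuclideanSpace ℝ (Fin N) → _) volume) := by
        rw [lintegral_map hmeas (measurable_const_smul _)]
    _ = ENNReal.ofReal ((t ^ N)⁻¹) *
          (ENNReal.ofReal |((t⁻¹) ^ (Module.finrank ℝ (EuclideanSpace ℝ (Fin N))))⁻¹| *
            Phi N (t⁻¹ • y)) := by
        rw [Measure.map_addHaar_smul _ (inv_ne_zero ht0), lintegral_smul_measure]; rfl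
    _ = Phi N (t⁻¹ • y) := by
        rw [finrank_euclideanSpace_fin, ← mul_assoc, inv_pow, inv_inv, abs_of_pos htN,
          ← ENNReal.ofReal_mul (by positivity), inv_mul_cancel₀ htN.ne',
          ENNReal.ofReal_one, one_mul]

lemma main_aux (N : ℕ) (f : EuclideanSpace ℝ (Fin N) → ℝ)
    (hf : Integrable f volume) (hfm : Measurable f) (hmean : (∫ x, f x) = 0) :
    Tendsto (fun t : ℝ => eLpNorm (fun x => ∫ y, Pt N t (x - y) * f y) 1 volume)
      atTop (nhds 0) := by
  have hPtc : ∀ t : ℝ, Continuous (Pt N t) := fun t =>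
    continuous_const.mul ((P_continuous N).comp (continuous_const_smul _))
  -- cancellation using the mean-zero assumption
  have key : ∀ (t : ℝ) (x : EuclideanSpace ℝ (Fin N)),
      (∫ y, Pt N t (x - y) * f y) = ∫ y, (Pt N t (x - y) - Pt N t x) * f y := by
    intro t x
    by_cases h : Integrable (fun y => Pt N t (x - y) * f y) volume
    · have e : (fun y => (Pt N t (x - y) - Pt N t x) * f y)
          = fun y => Pt N t (x - y) * f y - Pt N t x * f y := funext fun y => by ring
      rw [e, integral_sub h (hf.const_mul _), integral_const_mul, hmean, mul_zero, sub_zero]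
    · rw [integral_undef h, integral_undef]
      intro hc
      apply h
      have e : (fun y => Pt N t (x - y) * f y)
          = fun y => (Pt N t (x - y) - Pt N t x) * f y + Pt N t x * f y := funext fun y => by ring
      rw [e]
      exact hc.add (hf.const_mul _)
  -- measurability of Phi
  have hPhi_meas : Measurable (Phi N) := by
    apply Measurable.lintegral_prod_right'
      (f := fun p : EuclideanSpace ℝ (Fin N) × EuclideanSpace ℝ (Fin N) =>
        (‖P N (p.2 - p.1) - P N p.2‖₊ : ℝ≥0∞))
    exact ((((P_continuous N).comp (continuous_snd.sub continuous_fst)).sub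
      ((P_continuous N).comp continuous_snd)).measurable).nnnorm.coe_nnreal_ennreal
  -- the main bound
  have bound : ∀ t : ℝ, 0 < t → eLpNorm (fun x => ∫ y, Pt N t (x - y) * f y) 1 volume
      ≤ ∫⁻ y, (‖f y‖₊ : ℝ≥0∞) * Phi N (t⁻¹ • y) := by
    intro t ht
    have hm2 : AEMeasurable (fun p : EuclideanSpace ℝ (Fin N) × EuclideanSpace ℝ (Fin N) =>
        (‖(Pt N t (p.1 - p.2) - Pt N t p.1) * f p.2‖₊ : ℝ≥0∞))
        ((volume : Measure (EuclideanSpace ℝ (Fin N))).prod volume) := by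
      refine Measurable.aemeasurable ?_
      exact (((((hPtc t).comp (continuous_fst.sub continuous_snd)).sub
        ((hPtc t).comp continuous_fst)).measurable).mul
        (hfm.comp measurable_snd)).nnnorm.coe_nnreal_ennreal
    rw [eLpNorm_one_eq_lintegral_enorm]
    calc (∫⁻ x, (‖∫ y, Pt N t (x - y) * f y‖₊ : ℝ≥0∞))
        ≤ ∫⁻ x, ∫⁻ y, (‖(Pt N t (x - y) - Pt N t x) * f y‖₊ : ℝ≥0∞) := by
          refine lintegral_mono fun x => ?_
          rw [key t x]
          exact enorm_integral_le_lintegral_enorm _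
      _ = ∫⁻ y, ∫⁻ x, (‖(Pt N t (x - y) - Pt N t x) * f y‖₊ : ℝ≥0∞) :=
          lintegral_lintegral_swap hm2
      _ = ∫⁻ y, (‖f y‖₊ : ℝ≥0∞) * Phi N (t⁻¹ • y) := by
          refine lintegral_congr fun y => ?_
          have hmx : AEMeasurable
              (fun x : EuclideanSpace ℝ (Fin N) => (‖Pt N t (x - y) - Pt N t x‖₊ : ℝ≥0∞))
              volume :=
            ((((hPtc t).comp (continuous_id.sub continuous_const)).sub
              (hPtc t)).measurable.nnnorm.coe_nnreal_ennreal).aemeasurable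
          simp_rw [nnnorm_mul, ENNReal.coe_mul]
          rw [lintegral_mul_const'' _ hmx, scaling N ht y, mul_comm]
  -- dominated convergence
  set C : ℝ≥0∞ := 2 * ∫⁻ u, (‖P N u‖₊ : ℝ≥0∞) with hC
  have hCfin : C ≠ ⊤ := by
    rw [hC]
    exact (ENNReal.mul_lt_top ENNReal.ofNat_lt_top (P_finite_lintegral N)).ne
  have hdom : Tendsto (fun t : ℝ => ∫⁻ y, (‖f y‖₊ : ℝ≥0∞) * Phi N (t⁻¹ • y)) atTop
      (nhds 0) := by
    have h0 : (0 : ℝ≥0∞) = ∫⁻ _ : EuclideanSpace ℝ (Fin N), 0 ∂volume := by simp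
    rw [h0]
    refine tendsto_lintegral_filter_of_dominated_convergence
      (fun y => (‖f y‖₊ : ℝ≥0∞) * C) ?_ ?_ ?_ ?_
    · refine Eventually.of_forall fun t => ?_
      exact (hfm.nnnorm.coe_nnreal_ennreal).mul
        (hPhi_meas.comp (measurable_const_smul _))
    · refine Eventually.of_forall fun t => Eventually.of_forall fun y => ?_
      exact mul_le_mul_right (Phi_le N _) _
    · rw [lintegral_mul_const'' _ hfm.nnnorm.coe_nnreal_ennreal.aemeasurable]
      exact (ENNReal.mul_lt_top hf.hasFiniteIntegral (lt_of_le_of_ne le_top hCfin)).ne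
    · refine Eventually.of_forall fun y => ?_
      have h1 : Tendsto (fun t : ℝ => t⁻¹ • y) atTop (nhds 0) := by
        have := (tendsto_inv_atTop_zero (𝕜 := ℝ)).smul_const y
        simpa using this
      have h2 := (Phi_tendsto N).comp h1
      have h3 := ENNReal.Tendsto.const_mul (a := (‖f y‖₊ : ℝ≥0∞)) h2 (Or.inr ENNReal.coe_ne_top)
      simpa using h3
  refine tendsto_of_tendsto_of_tendsto_of_le_of_le' tendsto_const_nhds hdom
    (Eventually.of_forall fun t => zero_le) ?_
  filter_upwards [eventually_gt_atTop (0 : ℝ)] with t ht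
  exact bound t ht

theorem stmt_7 (N : ℕ) (hN : 1 ≤ N) (f : EuclideanSpace ℝ (Fin N) → ℝ)
    (hf : Integrable f volume) (hmean : (∫ x, f x) = 0) :
    Tendsto (fun t : ℝ => eLpNorm (fun x => ∫ y, Pt N t (x - y) * f y) 1 volume)
      atTop (nhds 0) := by
  set g := hf.1.mk f with hgdef
  have hae : f =ᵐ[volume] g := hf.1.ae_eq_mk
  have hgm : Measurable g := hf.1.stronglyMeasurable_mk.measurable
  have hg : Integrable g volume := hf.congr hae
  have hgmean : (∫ x, g x) = 0 := by rw [← integral_congr_ae hae, hmean]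
  have heq : ∀ (t : ℝ) (x : EuclideanSpace ℝ (Fin N)),
      (∫ y, Pt N t (x - y) * f y) = ∫ y, Pt N t (x - y) * g y := fun t x =>
    integral_congr_ae (hae.mono fun y hy => by simp only [hy])
  have := main_aux N g hg hgm hgmean
  refine this.congr fun t => ?_
  congr 1
  funext x
  rw [heq t x]
end

section
/- Let 1 < p < 2. There exists a constant C = C(p) > 0 such that for all real numbers A, B, C', D': | |A|^p − |B|^p − (|C'|^p − |D'|^p) | ≤ C ( |C'|^{p-1} + |D'|^{p-1} ) |A − B − (C' − D')| + C ( |A − C'|^{p-1} + |B − D'|^{p-1} ) |A − B|. -/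
open Real Set Filter

lemma aux_subadd {α : ℝ} (h0 : 0 ≤ α) (h1 : α ≤ 1) {x y : ℝ} (hx : 0 ≤ x) (hy : 0 ≤ y) :
    (x + y) ^ α ≤ x ^ α + y ^ α := by
  have h := NNReal.rpow_add_le_add_rpow x.toNNReal y.toNNReal h0 h1
  have h2 := NNReal.coe_le_coe.2 h
  push_cast at h2
  rwa [Real.coe_toNNReal x hx, Real.coe_toNNReal y hy] at h2

lemma aux_diff {α : ℝ} (h0 : 0 < α) (h1 : α ≤ 1) {x y : ℝ} (hx : 0 ≤ x) (hy : 0 ≤ y) :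
    |x ^ α - y ^ α| ≤ |x - y| ^ α := by
  wlog hxy : y ≤ x generalizing x y
  · rw [abs_sub_comm, abs_sub_comm x y]; exact this hy hx (le_of_not_ge hxy)
  rw [abs_of_nonneg (sub_nonneg.2 (Real.rpow_le_rpow hy hxy h0.le)),
      abs_of_nonneg (sub_nonneg.2 hxy)]
  have h3 : x ^ α ≤ (x - y) ^ α + y ^ α := by
    calc x ^ α = (x - y + y) ^ α := by ring_nf
    _ ≤ _ := aux_subadd h0.le h1 (sub_nonneg.2 hxy) hy
  linarith

lemma aux_sign_holder {α : ℝ} (h0 : 0 < α) (h1 : α ≤ 1) (x y : ℝ) :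
    |Real.sign x * |x| ^ α - Real.sign y * |y| ^ α| ≤ 2 * |x - y| ^ α := by
  have key : ∀ z : ℝ, 0 ≤ z → Real.sign z * |z| ^ α = z ^ α := by
    intro z hz
    rcases hz.eq_or_lt with rfl | hz
    · simp [Real.zero_rpow h0.ne']
    · rw [Real.sign_of_pos hz, abs_of_pos hz, one_mul]
  have keyn : ∀ z : ℝ, z ≤ 0 → Real.sign z * |z| ^ α = -((-z) ^ α) := by
    intro z hz
    rcases hz.lt_or_eq with hz | rfl
    · rw [Real.sign_of_neg hz, abs_of_neg hz, neg_one_mul]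
    · simp [Real.zero_rpow h0.ne']
  have main : ∀ x y : ℝ, 0 ≤ x → y ≤ 0 →
      |Real.sign x * |x| ^ α - Real.sign y * |y| ^ α| ≤ 2 * |x - y| ^ α := by
    intro x y hx hy
    rw [key x hx, keyn y hy, sub_neg_eq_add]
    have hxy : (0:ℝ) ≤ x - y := by linarith
    have hn1 := Real.rpow_nonneg hx α
    have hn2 := Real.rpow_nonneg (neg_nonneg.2 hy) α
    rw [abs_of_nonneg (add_nonneg hn1 hn2), abs_of_nonneg hxy, two_mul]
    have h1' : x ^ α ≤ (x - y) ^ α := Real.rpow_le_rpow hx (by linarith) h0.le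
    have h2' : (-y) ^ α ≤ (x - y) ^ α := Real.rpow_le_rpow (by linarith) (by linarith) h0.le
    linarith
  rcases le_total 0 x with hx | hx <;> rcases le_total 0 y with hy | hy
  · rw [key x hx, key y hy]
    refine (aux_diff h0 h1 hx hy).trans ?_
    have := Real.rpow_nonneg (abs_nonneg (x - y)) α
    linarith
  · exact main x y hx hy
  · calc |Real.sign x * |x| ^ α - Real.sign y * |y| ^ α|
        = |Real.sign y * |y| ^ α - Real.sign x * |x| ^ α| := abs_sub_comm _ _
    _ ≤ 2 * |y - x| ^ α := main y x hy hx
    _ = 2 * |x - y| ^ α := by rw [abs_sub_comm]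
  · rw [keyn x hx, keyn y hy]
    have e : -((-x) ^ α) - -((-y) ^ α) = (-y) ^ α - (-x) ^ α := by ring
    rw [e]
    have := aux_diff h0 h1 (x := -y) (y := -x) (by linarith) (by linarith)
    have e2 : -y - -x = x - y := by ring
    rw [e2] at this
    have := Real.rpow_nonneg (abs_nonneg (x - y)) α
    have h3 := aux_diff h0 h1 (x := -y) (y := -x) (by linarith) (by linarith)
    rw [e2] at h3
    linarith

lemma aux_deriv {q : ℝ} (hq : 1 < q) (x : ℝ) :
    HasDerivAt (fun z : ℝ => |z| ^ q) (q * |x| ^ (q - 1) * Real.sign x) x := by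
  rcases lt_trichotomy x 0 with hx | rfl | hx
  · have h2 : HasDerivAt (fun u : ℝ => u ^ q) (q * (-x) ^ (q - 1)) (-x) :=
      Real.hasDerivAt_rpow_const (Or.inl (by linarith))
    have h3 : HasDerivAt (fun z : ℝ => -z) (-1 : ℝ) x := by
      exact (hasDerivAt_id' x).neg
    have h1 : HasDerivAt (fun z : ℝ => (-z) ^ q) (q * (-x) ^ (q - 1) * (-1)) x := h2.comp x h3
    have heq : (fun z : ℝ => (-z) ^ q) =ᶠ[nhds x] fun z => |z| ^ q := by
      filter_upwards [Iio_mem_nhds hx] with z hz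
      rw [abs_of_neg hz]
    have := h1.congr_of_eventuallyEq heq.symm
    rwa [abs_of_neg hx, Real.sign_of_neg hx] 
  · have key : Tendsto (slope (fun z : ℝ => |z| ^ q) 0) (nhdsWithin 0 {(0:ℝ)}ᶜ) (nhds 0) := by
      apply squeeze_zero_norm' (a := fun z : ℝ => |z| ^ (q - 1))
      · filter_upwards [self_mem_nhdsWithin] with z hz
        have hz' : (z:ℝ) ≠ 0 := hz
        rw [slope_def_field]
        simp only [abs_zero, Real.zero_rpow (by linarith : q ≠ 0), sub_zero]
        rw [Real.norm_eq_abs, abs_div, abs_of_nonneg (Real.rpow_nonneg (abs_nonneg z) q),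
          Real.rpow_sub_one (abs_ne_zero.2 hz')]
      · have hc : ContinuousAt (fun z : ℝ => |z| ^ (q - 1)) 0 := by
          exact (Real.continuousAt_rpow_const _ _ (Or.inr (by linarith))).comp
            continuous_abs.continuousAt
        have := hc.tendsto
        simp only [abs_zero, Real.zero_rpow (by linarith : q - 1 ≠ 0)] at this
        exact this.mono_left nhdsWithin_le_nhds
    have h0 : HasDerivAt (fun z : ℝ => |z| ^ q) 0 0 :=
      hasDerivAt_iff_tendsto_slope.2 key
    simpa [Real.sign_zero] using h0
  · have h2 : HasDerivAt (fun u : ℝ => u ^ q) (q * x ^ (q - 1)) x :=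
      Real.hasDerivAt_rpow_const (Or.inl hx.ne')
    have heq : (fun z : ℝ => z ^ q) =ᶠ[nhds x] fun z => |z| ^ q := by
      filter_upwards [Ioi_mem_nhds hx] with z hz
      rw [abs_of_pos hz]
    have := h2.congr_of_eventuallyEq heq.symm
    rw [abs_of_pos hx, Real.sign_of_pos hx, mul_one]
    exact this

lemma aux_abs_sign_le (z : ℝ) : |Real.sign z| ≤ 1 := by
  rcases lt_trichotomy z 0 with h | rfl | h
  · simp [Real.sign_of_neg h]
  · simp [Real.sign_zero]
  · simp [Real.sign_of_pos h]

theorem stmt_10 (p : ℝ) (hp1 : 1 < p) (hp2 : p < 2) :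
    ∃ C : ℝ, 0 < C ∧ ∀ A B C' D' : ℝ,
      |(|A| ^ p - |B| ^ p - (|C'| ^ p - |D'| ^ p))|
        ≤ C * ((|C'| ^ (p - 1) + |D'| ^ (p - 1)) * |A - B - (C' - D')|)
          + C * ((|A - C'| ^ (p - 1) + |B - D'| ^ (p - 1)) * |A - B|) := by
  refine ⟨2 * p, by linarith, fun A B C' D' => ?_⟩
  have hα0 : (0:ℝ) < p - 1 := by linarith
  have hα1 : p - 1 ≤ 1 := by linarith
  set M : ℝ := 2 * p * ((|C'| ^ (p - 1) + |D'| ^ (p - 1)) * |A - B - (C' - D')|)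
      + 2 * p * ((|A - C'| ^ (p - 1) + |B - D'| ^ (p - 1)) * |A - B|) with hM
  set φ : ℝ → ℝ := fun z => p * |z| ^ (p - 1) * Real.sign z with hφ
  set f : ℝ → ℝ := fun t => |B + t * (A - B)| ^ p - |D' + t * (C' - D')| ^ p with hf
  set g : ℝ → ℝ := fun t =>
      φ (B + t * (A - B)) * (A - B) - φ (D' + t * (C' - D')) * (C' - D') with hg
  have hderiv : ∀ t ∈ Icc (0:ℝ) 1, HasDerivWithinAt f (g t) (Icc 0 1) t := by
    intro t _
    have h1 : HasDerivAt (fun t : ℝ => B + t * (A - B)) (A - B) t := by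
      simpa using ((hasDerivAt_id t).mul_const (A - B)).const_add B
    have h2 : HasDerivAt (fun t : ℝ => D' + t * (C' - D')) (C' - D') t := by
      simpa using ((hasDerivAt_id t).mul_const (C' - D')).const_add D'
    have h3 := (aux_deriv hp1 (B + t * (A - B))).comp t h1
    have h4 := (aux_deriv hp1 (D' + t * (C' - D'))).comp t h2
    exact ((h3.sub h4).hasDerivWithinAt)
  have bound : ∀ t ∈ Ico (0:ℝ) 1, ‖g t‖ ≤ M := by
    intro t ht
    obtain ⟨ht0, ht1⟩ := ht
    set x := B + t * (A - B) with hx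
    set y := D' + t * (C' - D') with hy
    -- bound |φ x - φ y|
    have est1 : |φ x - φ y| ≤ 2 * p * (|A - C'| ^ (p - 1) + |B - D'| ^ (p - 1)) := by
      have e : φ x - φ y
          = p * (Real.sign x * |x| ^ (p - 1) - Real.sign y * |y| ^ (p - 1)) := by
        simp only [hφ]; ring
      rw [e, abs_mul, abs_of_pos (by linarith : (0:ℝ) < p)]
      have h5 := aux_sign_holder hα0 hα1 x y
      have hxy : |x - y| ≤ |A - C'| + |B - D'| := by
        have e2 : x - y = (1 - t) * (B - D') + t * (A - C') := by
          simp only [hx, hy]; ring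
        rw [e2]
        calc |(1 - t) * (B - D') + t * (A - C')|
            ≤ |(1 - t) * (B - D')| + |t * (A - C')| := abs_add_le _ _
          _ = (1 - t) * |B - D'| + t * |A - C'| := by
              rw [abs_mul, abs_mul, abs_of_nonneg (by linarith : (0:ℝ) ≤ 1 - t),
                abs_of_nonneg ht0]
          _ ≤ |A - C'| + |B - D'| := by
              nlinarith [abs_nonneg (B - D'), abs_nonneg (A - C')]
      have h6 : |x - y| ^ (p - 1) ≤ |A - C'| ^ (p - 1) + |B - D'| ^ (p - 1) := by
        calc |x - y| ^ (p - 1) ≤ (|A - C'| + |B - D'|) ^ (p - 1) :=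
              Real.rpow_le_rpow (abs_nonneg _) hxy hα0.le
          _ ≤ _ := aux_subadd hα0.le hα1 (abs_nonneg _) (abs_nonneg _)
      calc p * |Real.sign x * |x| ^ (p - 1) - Real.sign y * |y| ^ (p - 1)|
          ≤ p * (2 * |x - y| ^ (p - 1)) := by
            apply mul_le_mul_of_nonneg_left h5 (by linarith)
        _ ≤ p * (2 * (|A - C'| ^ (p - 1) + |B - D'| ^ (p - 1))) := by
            apply mul_le_mul_of_nonneg_left (by linarith) (by linarith)
        _ = 2 * p * (|A - C'| ^ (p - 1) + |B - D'| ^ (p - 1)) := by ring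
    -- bound |φ y|
    have est2 : |φ y| ≤ 2 * p * (|C'| ^ (p - 1) + |D'| ^ (p - 1)) := by
      have e : |φ y| = p * |y| ^ (p - 1) * |Real.sign y| := by
        simp only [hφ, abs_mul, abs_of_pos (by linarith : (0:ℝ) < p),
          abs_of_nonneg (Real.rpow_nonneg (abs_nonneg y) (p - 1))]
      have hyb : |y| ≤ |C'| + |D'| := by
        have e2 : y = (1 - t) * D' + t * C' := by simp only [hy]; ring
        rw [e2]
        calc |(1 - t) * D' + t * C'| ≤ |(1 - t) * D'| + |t * C'| := abs_add_le _ _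
          _ = (1 - t) * |D'| + t * |C'| := by
              rw [abs_mul, abs_mul, abs_of_nonneg (by linarith : (0:ℝ) ≤ 1 - t),
                abs_of_nonneg ht0]
          _ ≤ |C'| + |D'| := by nlinarith [abs_nonneg D', abs_nonneg C']
      have h6 : |y| ^ (p - 1) ≤ |C'| ^ (p - 1) + |D'| ^ (p - 1) := by
        calc |y| ^ (p - 1) ≤ (|C'| + |D'|) ^ (p - 1) :=
              Real.rpow_le_rpow (abs_nonneg _) hyb hα0.le
          _ ≤ _ := aux_subadd hα0.le hα1 (abs_nonneg _) (abs_nonneg _)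
      have h7 : (0:ℝ) ≤ |C'| ^ (p - 1) + |D'| ^ (p - 1) := by positivity
      calc |φ y| = p * |y| ^ (p - 1) * |Real.sign y| := e
        _ ≤ p * |y| ^ (p - 1) * 1 := by
            apply mul_le_mul_of_nonneg_left (aux_abs_sign_le y)
            positivity
        _ = p * |y| ^ (p - 1) := mul_one _
        _ ≤ p * (|C'| ^ (p - 1) + |D'| ^ (p - 1)) :=
            mul_le_mul_of_nonneg_left h6 (by linarith)
        _ ≤ 2 * p * (|C'| ^ (p - 1) + |D'| ^ (p - 1)) := by nlinarith
    have e3 : g t = (φ x - φ y) * (A - B) + φ y * (A - B - (C' - D')) := by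
      simp only [hg, hx, hy]; ring
    rw [Real.norm_eq_abs, e3]
    calc |(φ x - φ y) * (A - B) + φ y * (A - B - (C' - D'))|
        ≤ |(φ x - φ y) * (A - B)| + |φ y * (A - B - (C' - D'))| := abs_add_le _ _
      _ = |φ x - φ y| * |A - B| + |φ y| * |A - B - (C' - D')| := by
          rw [abs_mul, abs_mul]
      _ ≤ 2 * p * (|A - C'| ^ (p - 1) + |B - D'| ^ (p - 1)) * |A - B|
          + 2 * p * (|C'| ^ (p - 1) + |D'| ^ (p - 1)) * |A - B - (C' - D')| := by
          exact add_le_add (mul_le_mul_of_nonneg_right est1 (abs_nonneg _))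
            (mul_le_mul_of_nonneg_right est2 (abs_nonneg _))
      _ = M := by rw [hM]; ring
  have key := norm_image_sub_le_of_norm_deriv_le_segment' hderiv bound 1
    (right_mem_Icc.2 zero_le_one)
  have e1 : f 1 = |A| ^ p - |C'| ^ p := by
    simp only [hf]
    norm_num
  have e2 : f 0 = |B| ^ p - |D'| ^ p := by
    simp only [hf]
    norm_num
  rw [e1, e2, Real.norm_eq_abs] at key
  have e4 : |A| ^ p - |C'| ^ p - (|B| ^ p - |D'| ^ p)
      = |A| ^ p - |B| ^ p - (|C'| ^ p - |D'| ^ p) := by ring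
  rw [e4] at key
  calc |(|A| ^ p - |B| ^ p - (|C'| ^ p - |D'| ^ p))| ≤ M * (1 - 0) := key
    _ = M := by ring
    _ = _ := by rw [hM]
end
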